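/- Let k ≥ 2 and let G be a graph with a list assignment L where |L(v)| = k for all v, and a matching assignment M_L. Let H be a subgraph of G whose vertices can be ordered v_1, ..., v_ℓ such that: (1) v_1 v_ℓ ∈ E(G); (2) given a DP-k-coloring of G − H, define A(v) ⊆ {v}×L(v) as the set of colors of v not matched to the chosen color of any colored neighbor in G − H; assume |A(v_1)| > |A(v_ℓ)| ≥ 1; (3) d(v_ℓ) ≤ k and v_ℓ has a neighbor in G − H; (4) for each 2 ≤ i ≤ ℓ−1, v_i has at most k−1 neighbors in G[{v_1,...,v_{i−1}}] ∪ (G − H). Then the DP-k-coloring of G − H extends to a DP-k-coloring of G. -/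

import Mathlib

/-- A matching assignment for a graph `G` with list assignment `L`:
for each edge `uv`, a (possibly empty) matching between `{u} × L u` and `{v} × L v`. -/
structure MatchingAssignment {V : Type} (G : SimpleGraph V) (L : V → Finset ℕ) where
  M : V → ℕ → V → ℕ → Prop
  symm : ∀ u i v j, M u i v j → M v j u i
  adj : ∀ u i v j, M u i v j → G.Adj u v
  mem_left : ∀ u i v j, M u i v j → i ∈ L u
  mem_right : ∀ u i v j, M u i v j → j ∈ L v
  right_unique : ∀ u i v j j', M u i v j → M u i v j' → j = j'
  left_unique : ∀ u i i' v j, M u i v j → M u i' v j → i = i'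

/-- The cover graph `G_L`: each fiber `{v} × L v` is a clique, and between fibers of
adjacent vertices the edges are exactly those of the matching. -/
def coverGraph {V : Type} (G : SimpleGraph V) (L : V → Finset ℕ)
    (MA : MatchingAssignment G L) : SimpleGraph (V × ℕ) where
  Adj p q := (p.1 = q.1 ∧ p.2 ≠ q.2 ∧ p.2 ∈ L p.1 ∧ q.2 ∈ L q.1) ∨ MA.M p.1 p.2 q.1 q.2
  symm := by
    constructor
    rintro p q (⟨h1, h2, h3, h4⟩ | h)
    · exact Or.inl ⟨h1.symm, fun h' => h2 h'.symm, h4, h3⟩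
    · exact Or.inr (MA.symm _ _ _ _ h)
  loopless := by
    constructor
    rintro p (⟨h1, h2, h3, h4⟩ | h)
    · exact h2 rfl
    · exact (MA.adj _ _ _ _ h).ne rfl

/-- An independent set in a simple graph. -/
def SimpleGraph.IsIndepSet' {α : Type} (H : SimpleGraph α) (I : Set α) : Prop :=
  ∀ p ∈ I, ∀ q ∈ I, ¬ H.Adj p q

/-- `G` is DP-`k`-colorable: for every list assignment with lists of size `k` and every
matching assignment, the cover graph contains an independent set of size `|V(G)|`
(with all its vertices in the fibers). -/
def DPColorable {V : Type} [Fintype V] [DecidableEq V] (G : SimpleGraph V) (k : ℕ) : Prop :=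
  ∀ L : V → Finset ℕ, (∀ v, (L v).card = k) → ∀ MA : MatchingAssignment G L,
    ∃ I : Finset (V × ℕ), I.card = Fintype.card V ∧ (∀ p ∈ I, p.2 ∈ L p.1) ∧
      (coverGraph G L MA).IsIndepSet' ↑I

/-- The DP-chromatic number. -/
noncomputable def dpChromaticNumber {V : Type} [Fintype V] [DecidableEq V]
    (G : SimpleGraph V) : ℕ :=
  sInf {k | DPColorable G k}

/-- `G` is `k`-choosable. -/
def Choosable {V : Type} (G : SimpleGraph V) (k : ℕ) : Prop :=
  ∀ L : V → Finset ℕ, (∀ v, k ≤ (L v).card) →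
    ∃ c : V → ℕ, (∀ v, c v ∈ L v) ∧ ∀ u v, G.Adj u v → c u ≠ c v

/-- The list chromatic number. -/
noncomputable def listChromaticNumber {V : Type} (G : SimpleGraph V) : ℕ :=
  sInf {k | Choosable G k}

lemma card_le_of_rel {α β : Type*} [DecidableEq β] (T : Finset α) (U : Finset β)
    (R : β → α → Prop)
    (hall : ∀ j ∈ T, ∃ u ∈ U, R u j)
    (huniq : ∀ u j j', R u j → R u j' → j = j') : T.card ≤ U.card := by
  classical
  rcases T.eq_empty_or_nonempty with rfl | ⟨j0, hj0⟩
  · simp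
  obtain ⟨u0, hu0, -⟩ := hall j0 hj0
  set f : α → β := fun j => if h : ∃ u ∈ U, R u j then h.choose else u0 with hf
  apply Finset.card_le_card_of_injOn f
  · intro j hj
    have h := hall j hj
    simp only [hf, dif_pos h]
    exact h.choose_spec.1
  · intro j₁ h₁ j₂ h₂ heq
    have e₁ := hall j₁ h₁; have e₂ := hall j₂ h₂
    simp only [hf, dif_pos e₁, dif_pos e₂] at heq
    exact huniq _ _ _ (heq ▸ e₁.choose_spec.2) e₂.choose_spec.2

lemma exists_avoid {T F : Finset ℕ} (h : F.card < T.card) : ∃ x ∈ T, x ∉ F := by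
  by_contra hc
  push_neg at hc
  exact absurd (Finset.card_le_card fun x hx => hc x hx) (by omega)

/-- the near-degenerate extension lemma: under conditions (1)-(4), a
DP-`k`-coloring of `G - H` extends to a DP-`k`-coloring of `G`. -/
theorem stmt_11 {V : Type} [Fintype V] [DecidableEq V] (G : SimpleGraph V) [DecidableRel G.Adj]
    (k : ℕ) (hk : 2 ≤ k) (L : V → Finset ℕ) (hL : ∀ v, (L v).card = k)
    (MA : MatchingAssignment G L)
    (ℓ : ℕ) (hℓ : 2 ≤ ℓ) (w : Fin ℓ → V) (hw : Function.Injective w)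
    (S : Finset V) (hS : S = Finset.univ.image w)
    (c : V → ℕ)
    (hc_mem : ∀ v ∉ S, c v ∈ L v)
    (hc_proper : ∀ u ∉ S, ∀ v, v ∉ S → G.Adj u v → ¬ MA.M u (c u) v (c v))
    (A : V → Set ℕ)
    (hA : ∀ v, A v = {i | i ∈ L v ∧ ∀ u ∉ S, G.Adj u v → ¬ MA.M u (c u) v i})
    (h1 : G.Adj (w ⟨0, by omega⟩) (w ⟨ℓ - 1, by omega⟩))
    (h1' : (A (w ⟨ℓ - 1, by omega⟩)).ncard < (A (w ⟨0, by omega⟩)).ncard)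
    (h1'' : 1 ≤ (A (w ⟨ℓ - 1, by omega⟩)).ncard)
    (h2 : G.degree (w ⟨ℓ - 1, by omega⟩) ≤ k)
    (h2' : ∃ u ∉ S, G.Adj u (w ⟨ℓ - 1, by omega⟩))
    (h3 : ∀ i : Fin ℓ, 1 ≤ (i : ℕ) → (i : ℕ) ≤ ℓ - 2 →
      {u | G.Adj (w i) u ∧ (u ∉ S ∨ ∃ j : Fin ℓ, (j : ℕ) < (i : ℕ) ∧ u = w j)}.ncard ≤ k - 1) :
    ∃ c' : V → ℕ, (∀ v, c' v ∈ L v) ∧ (∀ v ∉ S, c' v = c v) ∧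
      ∀ u v, G.Adj u v → ¬ MA.M u (c' u) v (c' v) := by
  classical
  have hl0 : (0 : ℕ) < ℓ := by omega
  have hl1 : ℓ - 1 < ℓ := by omega
  set t : V := w ⟨ℓ - 1, hl1⟩ with ht
  set v0 : V := w ⟨0, hl0⟩ with hv0def
  have h1t : G.Adj v0 t := h1
  set Af : V → Finset ℕ :=
    fun v => (L v).filter (fun i => ∀ u ∉ S, G.Adj u v → ¬ MA.M u (c u) v i) with hAfdef
  have hmemAf : ∀ v i, i ∈ Af v ↔
      i ∈ L v ∧ ∀ u ∉ S, G.Adj u v → ¬ MA.M u (c u) v i := by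
    intro v i; simp [hAfdef]
  have hAfA : ∀ v, A v = ↑(Af v) := by
    intro v; rw [hA]; ext i
    simp [hAfdef, Set.mem_setOf_eq]
  have hAcard : ∀ v, (A v).ncard = (Af v).card := fun v => by
    rw [hAfA v, Set.ncard_coe_finset]
  have hSmem : ∀ v, v ∈ S ↔ ∃ i : Fin ℓ, w i = v := by
    intro v; rw [hS]; simp [Finset.mem_image]
  have htS : t ∈ S := (hSmem t).2 ⟨⟨ℓ - 1, hl1⟩, rfl⟩
  have hv0S : v0 ∈ S := (hSmem v0).2 ⟨⟨0, hl0⟩, rfl⟩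
  have hcard_t : (Af t).card ≤ k := by
    calc (Af t).card ≤ (L t).card := Finset.card_filter_le _ _
    _ = k := hL t
  -- main inductive construction for indices 0 .. ℓ-2
  have key : ∀ m, m ≤ ℓ - 1 → ∃ col : Fin ℓ → ℕ,
      (∀ i : Fin ℓ, (i : ℕ) < m → col i ∈ L (w i)) ∧
      (∀ i : Fin ℓ, (i : ℕ) < m → ∀ u ∉ S, ¬ MA.M u (c u) (w i) (col i)) ∧
      (∀ i j : Fin ℓ, (i : ℕ) < m → (j : ℕ) < (i : ℕ) →
        ¬ MA.M (w j) (col j) (w i) (col i)) ∧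
      (0 < m → ∀ jc, MA.M (w ⟨0, hl0⟩) (col ⟨0, hl0⟩) t jc → jc ∉ Af t) := by
    intro m
    induction m with
    | zero =>
      intro _
      exact ⟨fun _ => 0, fun i hi => absurd hi (by omega),
        fun i hi => absurd hi (by omega),
        fun i j hi _ => absurd hi (by omega), fun h => absurd h (by omega)⟩
    | succ m ih =>
      intro hm1
      obtain ⟨col, hmem, hout, hpair, hspec⟩ := ih (by omega)
      by_cases hm0 : m = 0
      · -- choose the color of w 0 avoiding partners of A(t)
        subst hm0
        set i0 : Fin ℓ := ⟨0, hl0⟩ with hi0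
        set P : Finset ℕ :=
          (L v0).filter (fun x => ∃ jc ∈ Af t, MA.M v0 x t jc) with hPdef
        have hP : P.card ≤ (Af t).card := by
          apply card_le_of_rel P (Af t) (fun jc x => MA.M v0 x t jc)
          · intro x hx
            rw [hPdef, Finset.mem_filter] at hx
            obtain ⟨-, jc, hjc, hMjc⟩ := hx
            exact ⟨jc, hjc, hMjc⟩
          · intro jc x x' h h'
            exact MA.left_unique _ _ _ _ _ h h'
        have hPlt : P.card < (Af v0).card := by
          have e1 := hAcard t
          have e2 := hAcard v0
          omega
        obtain ⟨x, hxA, hxP⟩ := exists_avoid hPlt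
        have hxL : x ∈ L v0 := ((hmemAf v0 x).1 hxA).1
        refine ⟨Function.update col i0 x, ?_, ?_, ?_, ?_⟩
        · intro i hi
          have : i = i0 := Fin.ext (by simpa [hi0] using Nat.lt_one_iff.1 hi)
          subst this
          rw [Function.update_self]
          exact hxL
        · intro i hi u huS hM
          have hii : i = i0 := Fin.ext (by simpa [hi0] using Nat.lt_one_iff.1 hi)
          subst hii
          rw [Function.update_self] at hM
          have hadj : G.Adj u (w i0) := MA.adj _ _ _ _ hM
          exact ((hmemAf v0 x).1 hxA).2 u huS hadj hM
        · intro i j hi hj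
          have : i = i0 := Fin.ext (by simpa [hi0] using Nat.lt_one_iff.1 hi)
          subst this
          simp [hi0] at hj
        · intro _ jc hM hjc
          rw [Function.update_self] at hM
          exact hxP (by
            rw [hPdef, Finset.mem_filter]
            exact ⟨hxL, jc, hjc, hM⟩)
      · -- middle vertex w m, 1 ≤ m ≤ ℓ - 2
        have hmL : m < ℓ := by omega
        set im : Fin ℓ := ⟨m, hmL⟩ with him
        set Ni : Finset V := (G.neighborFinset (w im)).filter
          (fun u => u ∉ S ∨ ∃ j : Fin ℓ, (j : ℕ) < m ∧ u = w j) with hNidef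
        have hNicard : Ni.card ≤ k - 1 := by
          have h3' := h3 im (by simp [him]; omega) (by simp [him]; omega)
          have hset : {u | G.Adj (w im) u ∧
              (u ∉ S ∨ ∃ j : Fin ℓ, (j : ℕ) < (im : ℕ) ∧ u = w j)} = ↑Ni := by
            ext u
            simp [hNidef, SimpleGraph.mem_neighborFinset, him]
          rw [hset, Set.ncard_coe_finset] at h3'
          exact h3'
        set cc : V → ℕ := fun u =>
          if h : ∃ j : Fin ℓ, (j : ℕ) < m ∧ u = w j then col h.choose else c u with hccdef
        have hcc_out : ∀ u ∉ S, cc u = c u := by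
          intro u huS
          rw [hccdef]
          apply dif_neg
          rintro ⟨j, -, rfl⟩
          exact huS ((hSmem _).2 ⟨j, rfl⟩)
        have hcc_w : ∀ j : Fin ℓ, (j : ℕ) < m → cc (w j) = col j := by
          intro j hj
          have hex : ∃ j' : Fin ℓ, (j' : ℕ) < m ∧ w j = w j' := ⟨j, hj, rfl⟩
          rw [hccdef]
          simp only [dif_pos hex]
          have := hex.choose_spec
          rw [hw this.2.symm]
        set F : Finset ℕ := (L (w im)).filter
          (fun x => ∃ u ∈ Ni, MA.M u (cc u) (w im) x) with hFdef
        have hFle : F.card ≤ Ni.card := by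
          apply card_le_of_rel F Ni (fun u x => MA.M u (cc u) (w im) x)
          · intro x hx
            rw [hFdef, Finset.mem_filter] at hx
            exact hx.2
          · intro u x x' h h'
            exact MA.right_unique _ _ _ _ _ h h'
        have hFlt : F.card < (L (w im)).card := by
          rw [hL]; omega
        obtain ⟨x, hxL, hxF⟩ := exists_avoid hFlt
        have hupd : ∀ i : Fin ℓ, (i : ℕ) < m → Function.update col im x i = col i := by
          intro i hi
          apply Function.update_of_ne
          intro hcontra
          rw [hcontra] at hi
          simp [him] at hi
        refine ⟨Function.update col im x, ?_, ?_, ?_, ?_⟩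
        · intro i hi
          rcases Nat.lt_or_ge (i : ℕ) m with h | h
          · rw [hupd i h]; exact hmem i h
          · have : i = im := Fin.ext (by simp [him]; omega)
            subst this
            rw [Function.update_self]
            exact hxL
        · intro i hi u huS hM
          rcases Nat.lt_or_ge (i : ℕ) m with h | h
          · rw [hupd i h] at hM; exact hout i h u huS hM
          · have hii : i = im := Fin.ext (by simp [him]; omega)
            subst hii
            rw [Function.update_self] at hM
            apply hxF
            rw [hFdef, Finset.mem_filter]
            refine ⟨hxL, u, ?_, ?_⟩
            · rw [hNidef, Finset.mem_filter, SimpleGraph.mem_neighborFinset]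
              exact ⟨(MA.adj _ _ _ _ hM).symm, Or.inl huS⟩
            · rw [hcc_out u huS]; exact hM
        · intro i j hi hj hM
          rcases Nat.lt_or_ge (i : ℕ) m with h | h
          · rw [hupd i h, hupd j (by omega)] at hM
            exact hpair i j h hj hM
          · have hii : i = im := Fin.ext (by simp [him]; omega)
            subst hii
            have hjm : (j : ℕ) < m := by simpa [him] using hj
            rw [Function.update_self, hupd j hjm] at hM
            apply hxF
            rw [hFdef, Finset.mem_filter]
            refine ⟨hxL, w j, ?_, ?_⟩
            · rw [hNidef, Finset.mem_filter, SimpleGraph.mem_neighborFinset]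
              exact ⟨(MA.adj _ _ _ _ hM).symm, Or.inr ⟨j, hjm, rfl⟩⟩
            · rw [hcc_w j hjm]; exact hM
        · intro _ jc hM
          have h0m : ((⟨0, hl0⟩ : Fin ℓ) : ℕ) < m := by simp; omega
          rw [hupd _ h0m] at hM
          exact hspec (by omega) jc hM
  -- extract the coloring of w 0 .. w (ℓ-2)
  obtain ⟨col, hmem, hout, hpair, hspec⟩ := key (ℓ - 1) le_rfl
  have hspec' := hspec (by omega)
  -- the last vertex
  set Nout : Finset V := (G.neighborFinset t).filter (fun u => u ∉ S) with hNoutdef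
  set Nin : Finset V := (G.neighborFinset t).filter (fun u => u ∈ S) with hNindef
  have hsum : Nin.card + Nout.card = G.degree t := by
    rw [hNindef, hNoutdef, ← SimpleGraph.card_neighborFinset_eq_degree]
    exact Finset.card_filter_add_card_filter_not (fun u => u ∈ S)
  have hout_ge : k - (Af t).card ≤ Nout.card := by
    have hTcard : ((L t) \ Af t).card = k - (Af t).card := by
      rw [Finset.card_sdiff_of_subset (Finset.filter_subset _ _), hL]
    rw [← hTcard]
    apply card_le_of_rel _ Nout (fun u x => MA.M u (c u) t x)
    · intro x hx
      rw [Finset.mem_sdiff] at hx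
      obtain ⟨hxL, hxA⟩ := hx
      rw [hmemAf] at hxA
      push_neg at hxA
      obtain ⟨u, huS, hadj, hM⟩ := hxA hxL
      refine ⟨u, ?_, hM⟩
      rw [hNoutdef, Finset.mem_filter, SimpleGraph.mem_neighborFinset]
      exact ⟨hadj.symm, huS⟩
    · intro u x x' h h'
      exact MA.right_unique _ _ _ _ _ h h'
  have hNin : Nin.card ≤ (Af t).card := by
    have hdeg := h2
    omega
  have hv0Nin : v0 ∈ Nin := by
    rw [hNindef, Finset.mem_filter, SimpleGraph.mem_neighborFinset]
    exact ⟨h1t.symm, hv0S⟩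
  set B : Finset V := Nin.erase v0 with hBdef
  have hBcard : B.card = Nin.card - 1 := by
    rw [hBdef, Finset.card_erase_of_mem hv0Nin]
  set F : Finset ℕ := (Af t).filter
    (fun x => ∃ i : Fin ℓ, 0 < (i : ℕ) ∧ (i : ℕ) < ℓ - 1 ∧ MA.M (w i) (col i) t x)
    with hFdef
  have hFB : F.card ≤ B.card := by
    apply card_le_of_rel F B (fun u x => ∃ i : Fin ℓ,
      0 < (i : ℕ) ∧ (i : ℕ) < ℓ - 1 ∧ u = w i ∧ MA.M (w i) (col i) t x)
    · intro x hx
      rw [hFdef, Finset.mem_filter] at hx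
      obtain ⟨-, i, hipos, hilt, hM⟩ := hx
      refine ⟨w i, ?_, i, hipos, hilt, rfl, hM⟩
      rw [hBdef, Finset.mem_erase]
      constructor
      · intro hcontra
        have := hw (hcontra : w i = w ⟨0, hl0⟩)
        rw [this] at hipos
        simp at hipos
      · rw [hNindef, Finset.mem_filter, SimpleGraph.mem_neighborFinset]
        exact ⟨(MA.adj _ _ _ _ hM).symm, (hSmem _).2 ⟨i, rfl⟩⟩
    · rintro u x x' ⟨i, _, _, rfl, hM⟩ ⟨i', _, _, hii', hM'⟩
      have : i' = i := hw hii'.symm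
      subst this
      exact MA.right_unique _ _ _ _ _ hM hM'
  have hat : 1 ≤ (Af t).card := by
    have := hAcard t; omega
  have hFlt : F.card < (Af t).card := by omega
  obtain ⟨xt, hxtA, hxtF⟩ := exists_avoid hFlt
  -- define the extended coloring
  set c' : V → ℕ := fun v =>
    if v = t then xt else if h : ∃ i : Fin ℓ, w i = v then col h.choose else c v
    with hc'def
  have hwt : ∀ i : Fin ℓ, (i : ℕ) < ℓ - 1 → w i ≠ t := by
    intro i hi heq
    have := hw (heq : w i = w ⟨ℓ - 1, hl1⟩)
    rw [this] at hi
    simp at hi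
  have hc't : c' t = xt := by rw [hc'def]; simp
  have hc'w : ∀ i : Fin ℓ, (i : ℕ) < ℓ - 1 → c' (w i) = col i := by
    intro i hi
    have hex : ∃ i' : Fin ℓ, w i' = w i := ⟨i, rfl⟩
    rw [hc'def]
    simp only [if_neg (hwt i hi), dif_pos hex]
    rw [hw hex.choose_spec]
  have hc'out : ∀ v ∉ S, c' v = c v := by
    intro v hvS
    rw [hc'def]
    simp only
    rw [if_neg (show v ≠ t from fun h => hvS (by rw [h]; exact htS)), dif_neg]
    rintro ⟨i, rfl⟩
    exact hvS ((hSmem _).2 ⟨i, rfl⟩)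
  have tri : ∀ v : V, (v = t ∧ c' v = xt) ∨
      (∃ i : Fin ℓ, (i : ℕ) < ℓ - 1 ∧ v = w i ∧ c' v = col i) ∨
      (v ∉ S ∧ c' v = c v) := by
    intro v
    by_cases hvt : v = t
    · exact Or.inl ⟨hvt, hvt ▸ hc't⟩
    by_cases hvS : v ∈ S
    · obtain ⟨i, hi⟩ := (hSmem v).1 hvS
      have hival : (i : ℕ) < ℓ - 1 := by
        rcases Nat.lt_or_ge (i : ℕ) (ℓ - 1) with h | h
        · exact h
        · exfalso
          apply hvt
          have hieq : i = ⟨ℓ - 1, hl1⟩ := Fin.ext (show (i : ℕ) = ℓ - 1 by have := i.isLt; omega)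
          rw [← hi, hieq]
      exact Or.inr (Or.inl ⟨i, hival, hi.symm, hi ▸ hc'w i hival⟩)
    · exact Or.inr (Or.inr ⟨hvS, hc'out v hvS⟩)
  have hxtL : xt ∈ L t := ((hmemAf t xt).1 hxtA).1
  refine ⟨c', ?_, fun v hv => hc'out v hv, ?_⟩
  · intro v
    rcases tri v with ⟨hv, ev⟩ | ⟨i, hi, hv, ev⟩ | ⟨hv, ev⟩
    · rw [ev, hv]; exact hxtL
    · rw [ev, hv]; exact hmem i hi
    · rw [ev]; exact hc_mem v hv
  · intro u v hadj hM
    rcases tri u with ⟨hu, eu⟩ | ⟨i, hi, hu, eu⟩ | ⟨hu, eu⟩ <;>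
      rcases tri v with ⟨hv, ev⟩ | ⟨j, hj, hv, ev⟩ | ⟨hv, ev⟩
    · subst hu; subst hv; exact hadj.ne rfl
    · -- u = t, v = w j
      rw [eu, ev] at hM
      subst hu; subst hv
      have hM' : MA.M (w j) (col j) t xt := MA.symm _ _ _ _ hM
      rcases Nat.eq_zero_or_pos (j : ℕ) with h0 | h0
      · have : j = ⟨0, hl0⟩ := Fin.ext h0
        subst this
        exact hspec' xt hM' hxtA
      · exact hxtF (by
          rw [hFdef, Finset.mem_filter]
          exact ⟨hxtA, j, h0, hj, hM'⟩)
    · -- u = t, v ∉ S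
      rw [eu, ev] at hM
      subst hu
      have hM' : MA.M v (c v) t xt := MA.symm _ _ _ _ hM
      exact ((hmemAf t xt).1 hxtA).2 v hv hadj.symm hM'
    · -- u = w i, v = t
      rw [eu, ev] at hM
      subst hu; subst hv
      rcases Nat.eq_zero_or_pos (i : ℕ) with h0 | h0
      · have : i = ⟨0, hl0⟩ := Fin.ext h0
        subst this
        exact hspec' xt hM hxtA
      · exact hxtF (by
          rw [hFdef, Finset.mem_filter]
          exact ⟨hxtA, i, h0, hi, hM⟩)
    · -- u = w i, v = w j
      rw [eu, ev] at hM
      subst hu; subst hv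
      rcases Nat.lt_or_ge (i : ℕ) (j : ℕ) with h | h
      · exact hpair j i hj h hM
      · have hne : (i : ℕ) ≠ (j : ℕ) := by
          intro hcontra
          exact hadj.ne (congrArg w (Fin.ext hcontra))
        have : (j : ℕ) < (i : ℕ) := by omega
        exact hpair i j hi this (MA.symm _ _ _ _ hM)
    · -- u = w i, v ∉ S
      rw [eu, ev] at hM
      subst hu
      exact hout i hi v hv (MA.symm _ _ _ _ hM)
    · -- u ∉ S, v = t
      rw [eu, ev] at hM
      subst hv
      exact ((hmemAf t xt).1 hxtA).2 u hu hadj hM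
    · -- u ∉ S, v = w j
      rw [eu, ev] at hM
      subst hv
      exact hout j hj u hu hM
    · rw [eu, ev] at hM
      exact hc_proper u hu v hv hadj hM
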